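/- In a finite connected simple graph G, every peripheral vertex belongs to the CEJZ boundary (∂G)', and consequently every peripheral vertex belongs to the Steinerberger boundary ∂G. -/
import Mathlib


open Finset

variable {V : Type*}

/-- The Steinerberger boundary of a graph. -/
def sBoundary (G : SimpleGraph V) [Fintype V] [DecidableRel G.Adj] : Set V :=
  if Fintype.card V = 1 then Set.univ
  else {v | ∃ u : V, ∑ w ∈ G.neighborFinset v, G.dist w u < G.degree v * G.dist v u}

/-- The Chartrand–Erwin–Johns–Zhang boundary of a graph. -/
def cBoundary (G : SimpleGraph V) : Set V :=
  {v | ∃ u : V, ∀ w : V, G.Adj v w → G.dist w u ≤ G.dist v u}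

/-- The eccentricity of a vertex: the maximum distance to another vertex. -/
noncomputable def ecc (G : SimpleGraph V) [Fintype V] (v : V) : ℕ :=
  Finset.univ.sup fun w => G.dist v w

/-- The diameter of a graph: the maximum eccentricity. -/
noncomputable def gdiam (G : SimpleGraph V) [Fintype V] : ℕ :=
  Finset.univ.sup fun v => ecc G v

theorem peripheral_mem_boundaries [Fintype V] (G : SimpleGraph V) [DecidableRel G.Adj]
    (hc : G.Connected) (v : V) (hv : ecc G v = gdiam G) :
    v ∈ cBoundary G ∧ v ∈ sBoundary G := by
  obtain ⟨u, -, hu⟩ := Finset.exists_mem_eq_sup Finset.univ ⟨v, Finset.mem_univ v⟩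
    fun w => G.dist v w
  -- ecc G v = G.dist v u
  have huv : ecc G v = G.dist v u := hu
  have key : ∀ w : V, G.dist w u ≤ G.dist v u := by
    intro w
    calc G.dist w u ≤ ecc G w := Finset.le_sup (Finset.mem_univ u)
    _ ≤ gdiam G := Finset.le_sup (Finset.mem_univ w)
    _ = ecc G v := hv.symm
    _ = G.dist v u := huv
  have hcB : v ∈ cBoundary G := ⟨u, fun w _ => key w⟩
  refine ⟨hcB, ?_⟩
  unfold sBoundary
  split
  · exact Set.mem_univ v
  · rename_i hcard
    -- card ≥ 2, so there is x ≠ v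
    have h2 : 1 < Fintype.card V := by
      have : 0 < Fintype.card V := Fintype.card_pos_iff.mpr ⟨v⟩
      omega
    obtain ⟨x, hx⟩ := Fintype.exists_ne_of_one_lt_card h2 v
    have hdx : 0 < G.dist v x := (hc.pos_dist_of_ne (Ne.symm hx))
    have hvu : 0 < G.dist v u := by
      have : G.dist v x ≤ ecc G v := Finset.le_sup (Finset.mem_univ x)
      omega
    have hne : v ≠ u := by
      intro h; rw [h, SimpleGraph.dist_self] at hvu; omega
    -- get a neighbor on a shortest path
    obtain ⟨p, hp⟩ := hc.exists_walk_length_eq_dist v u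
    cases p with
    | nil => exact absurd rfl hne
    | cons hadj q =>
      rename_i w
      have hwq : G.dist w u ≤ q.length := SimpleGraph.dist_le q
      have hplen : q.length + 1 = G.dist v u := by
        simpa [SimpleGraph.Walk.length_cons] using hp
      have hwlt : G.dist w u < G.dist v u := by omega
      refine ⟨u, ?_⟩
      have hwmem : w ∈ G.neighborFinset v := by
        rw [SimpleGraph.mem_neighborFinset]; exact hadj
      have hsum : ∑ z ∈ G.neighborFinset v, G.dist z u <
          ∑ _z ∈ G.neighborFinset v, G.dist v u := by
        exact Finset.sum_lt_sum (fun z _ => key z) ⟨w, hwmem, hwlt⟩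
      rwa [Finset.sum_const, smul_eq_mul, SimpleGraph.card_neighborFinset_eq_degree] at hsum
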